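/- Let R be a commutative Noetherian ring. Let Y be a bounded below acyclic chain complex of R-modules all of whose cycle modules Z_n(Y) are cotorsion. Then Ext^1(F, Y) = 0 for every F-totally acyclic complex of flats F, where Ext^1 is computed in the abelian category Ch(R) of chain complexes of R-modules. -/

import Mathlib

/-!
STATEMENT 8: Let `R` be a commutative Noetherian ring and `Y` a bounded below acyclic chain
complex of `R`-modules all of whose cycle modules are cotorsion.  Then `Ext¹(F, Y) = 0` in
`Ch(R)` for every F-totally acyclic complex of flats `F`.

The vanishing of the (Yoneda) group `Ext¹(A, B)` is expressed by the (equivalent)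
statement that every short exact sequence `0 → B → E → A → 0` splits.
-/

universe u

open CategoryTheory MonoidalCategory Limits

/-- Vanishing of (Yoneda) `Ext¹(A, B)` in an abelian category: every short exact
sequence `0 → B → E → A → 0` splits. -/
def Ext1Vanishes {C : Type*} [Category C] [Abelian C] (A B : C) : Prop :=
  ∀ (E : C) (f : B ⟶ E) (g : E ⟶ A) (w : f ≫ g = 0),
    (ShortComplex.mk f g w).ShortExact → ∃ s : A ⟶ E, s ≫ g = 𝟙 A

variable {R : Type u} [CommRing R]

/-- An `R`-module `M` is cotorsion if `Ext¹_R(F, M) = 0` for every flat `R`-module `F`. -/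
def IsCotorsionModule (M : ModuleCat.{u} R) : Prop :=
  ∀ F : ModuleCat.{u} R, Module.Flat R F → Ext1Vanishes F M

/-- A chain complex `F` of `R`-modules is an F-totally acyclic complex of flats if all its
components are flat, it is acyclic, and `I ⊗[R] F` is acyclic for every injective
`R`-module `I`. -/
def FTotallyAcyclic (F : ChainComplex (ModuleCat.{u} R) ℤ) : Prop :=
  (∀ n, Module.Flat R (F.X n)) ∧ (∀ n, F.ExactAt n) ∧
    ∀ I : ModuleCat.{u} R, Module.Injective R I →
      ∀ n, (((tensorLeft I).mapHomologicalComplex (ComplexShape.down ℤ)).obj F).ExactAt n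

/-! ### Auxiliary lemmas -/

/-- Constructing short exact sequences of modules concretely. -/
lemma aux_moduleCat_shortExact {A B C : ModuleCat.{u} R} (f : A ⟶ B) (g : B ⟶ C)
    (w : f ≫ g = 0) (hf : Function.Injective f) (hg : Function.Surjective g)
    (hex : ∀ b : B, g b = 0 → ∃ a : A, f a = b) :
    (ShortComplex.mk f g w).ShortExact where
  exact := (ShortComplex.moduleCat_exact_iff _).2 hex
  mono_f := (ModuleCat.mono_iff_injective f).2 hf
  epi_g := (ModuleCat.epi_iff_surjective g).2 hg

/-- Being cotorsion is invariant under isomorphism. -/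
lemma aux_isCotorsionModule_of_iso {M N : ModuleCat.{u} R} (e : M ≅ N)
    (h : IsCotorsionModule N) : IsCotorsionModule M := by
  intro Fm hFm E f g w hse
  have w' : (e.inv ≫ f) ≫ g = 0 := by rw [Category.assoc, w, comp_zero]
  have hse' : (ShortComplex.mk (e.inv ≫ f) g w').ShortExact := by
    refine ShortComplex.shortExact_of_iso ?_ hse
    exact ShortComplex.isoMk e (Iso.refl E) (Iso.refl Fm) (by simp) (by simp)
  obtain ⟨s, hs⟩ := h Fm hFm E (e.inv ≫ f) g w' hse'
  exact ⟨s, hs⟩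

/-- Lifting along a map with cotorsion kernel, from a flat module. -/
lemma aux_exists_lift {M N Fm : ModuleCat.{u} R} (hFm : Module.Flat R Fm)
    (p : M ⟶ N) (φ : Fm ⟶ N)
    (hker : IsCotorsionModule (ModuleCat.of R (LinearMap.ker p.hom)))
    (hsub : ∀ x : Fm, ∃ m : M, p m = φ x) :
    ∃ ψ : Fm ⟶ M, ψ ≫ p = φ := by
  classical
  set q : (M × Fm) →ₗ[R] N :=
    p.hom.comp (LinearMap.fst R M Fm) - φ.hom.comp (LinearMap.snd R M Fm) with hq
  have hqmem : ∀ v : M × Fm, v ∈ LinearMap.ker q ↔ p v.1 = φ v.2 := by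
    intro v
    rw [LinearMap.mem_ker]
    simp [hq, sub_eq_zero]
  have hmem0 : ∀ y : LinearMap.ker p.hom,
      ((LinearMap.inl R M Fm).comp (LinearMap.ker p.hom).subtype) y ∈ LinearMap.ker q := by
    intro y
    rw [hqmem]
    simp [LinearMap.mem_ker.1 y.2]
  set f0 : ModuleCat.of R (LinearMap.ker p.hom) ⟶ ModuleCat.of R (LinearMap.ker q) :=
    ModuleCat.ofHom (LinearMap.codRestrict (LinearMap.ker q)
      ((LinearMap.inl R M Fm).comp (LinearMap.ker p.hom).subtype) hmem0) with hf0
  set g0 : ModuleCat.of R (LinearMap.ker q) ⟶ Fm :=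
    ModuleCat.ofHom ((LinearMap.snd R M Fm).comp (LinearMap.ker q).subtype) with hg0
  have w0 : f0 ≫ g0 = 0 := by
    ext y
    rfl
  have hse : (ShortComplex.mk f0 g0 w0).ShortExact := by
    refine aux_moduleCat_shortExact f0 g0 w0 ?_ ?_ ?_
    · intro a b hab
      apply Subtype.ext
      have h1 : ((f0 a).val).1 = ((f0 b).val).1 := by rw [hab]
      exact h1
    · intro x
      obtain ⟨m, hm⟩ := hsub x
      exact ⟨⟨(m, x), (hqmem _).2 hm⟩, rfl⟩
    · intro v hv
      have hv2 : (v.val).2 = 0 := hv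
      have hp : p (v.val).1 = 0 := by
        have h1 := (hqmem v.val).1 v.property
        rw [hv2, map_zero] at h1
        exact h1
      refine ⟨⟨(v.val).1, LinearMap.mem_ker.2 hp⟩, ?_⟩
      apply Subtype.ext
      show ((v.val).1, (0 : Fm)) = v.val
      exact Prod.ext rfl hv2.symm
  obtain ⟨s, hs⟩ := hker Fm hFm (ModuleCat.of R (LinearMap.ker q)) f0 g0 w0 hse
  refine ⟨s ≫ ModuleCat.ofHom ((LinearMap.fst R M Fm).comp (LinearMap.ker q).subtype), ?_⟩
  ext x
  have hx2 : ((s x).val).2 = x := ConcreteCategory.congr_hom hs x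
  have hx1 := (hqmem (s x).val).1 (s x).property
  show p ((s x).val.1) = φ x
  rw [hx1, hx2]

open Classical in
/-- The recursive construction of a degreewise section adapted to the differentials. -/
noncomputable def secAux (F E : ChainComplex (ModuleCat.{u} R) ℤ) (g : E ⟶ F) (M : ℤ)
    (base : ∀ n : ℤ, F.X n ⟶ E.X n) (n : ℤ) : F.X n ⟶ E.X n :=
  if _h : n ≤ M then base n
  else if hex : ∃ σ : F.X n ⟶ E.X n, σ ≫ g.f n = 𝟙 (F.X n) ∧
      σ ≫ E.d n (n - 1) = F.d n (n - 1) ≫ secAux F E g M base (n - 1) then hex.choose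
  else 0
termination_by (n - M).toNat
decreasing_by simp_wf; omega

open Classical in
lemma secAux_of_le (F E : ChainComplex (ModuleCat.{u} R) ℤ) (g : E ⟶ F) (M : ℤ)
    (base : ∀ n : ℤ, F.X n ⟶ E.X n) {n : ℤ} (h : n ≤ M) :
    secAux F E g M base n = base n := by
  rw [secAux]
  rw [dif_pos h]

open Classical in
lemma secAux_of_gt (F E : ChainComplex (ModuleCat.{u} R) ℤ) (g : E ⟶ F) (M : ℤ)
    (base : ∀ n : ℤ, F.X n ⟶ E.X n) {n : ℤ} (h : ¬ n ≤ M) :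
    secAux F E g M base n =
      if hex : ∃ σ : F.X n ⟶ E.X n, σ ≫ g.f n = 𝟙 (F.X n) ∧
          σ ≫ E.d n (n - 1) = F.d n (n - 1) ≫ secAux F E g M base (n - 1) then hex.choose
      else 0 := by
  rw [secAux]
  rw [dif_neg h]

open Classical in
lemma secAux_spec (F E : ChainComplex (ModuleCat.{u} R) ℤ) (g : E ⟶ F) (M : ℤ)
    (base : ∀ n : ℤ, F.X n ⟶ E.X n)
    (hbase1 : ∀ n, n ≤ M → base n ≫ g.f n = 𝟙 (F.X n))
    (hbase2 : ∀ n, n ≤ M → base n ≫ E.d n (n - 1) = F.d n (n - 1) ≫ base (n - 1))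
    (hstep : ∀ n : ℤ, ∀ prev : F.X (n - 1) ⟶ E.X (n - 1),
      prev ≫ g.f (n - 1) = 𝟙 (F.X (n - 1)) →
      (∃ t : F.X (n - 1 - 1) ⟶ E.X (n - 1 - 1),
        prev ≫ E.d (n - 1) (n - 1 - 1) = F.d (n - 1) (n - 1 - 1) ≫ t) →
      ∃ σ : F.X n ⟶ E.X n, σ ≫ g.f n = 𝟙 (F.X n) ∧
        σ ≫ E.d n (n - 1) = F.d n (n - 1) ≫ prev) :
    ∀ n : ℤ, secAux F E g M base n ≫ g.f n = 𝟙 (F.X n) ∧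
      secAux F E g M base n ≫ E.d n (n - 1) =
        F.d n (n - 1) ≫ secAux F E g M base (n - 1) := by
  have key : ∀ k : ℕ, ∀ n : ℤ, n ≤ M + k →
      secAux F E g M base n ≫ g.f n = 𝟙 (F.X n) ∧
      secAux F E g M base n ≫ E.d n (n - 1) =
        F.d n (n - 1) ≫ secAux F E g M base (n - 1) := by
    intro k
    induction k with
    | zero =>
      intro n hn
      have hn' : n ≤ M := by omega
      rw [secAux_of_le F E g M base hn', secAux_of_le F E g M base (show n - 1 ≤ M by omega)]
      exact ⟨hbase1 n hn', hbase2 n hn'⟩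
    | succ k ih =>
      intro n hn
      by_cases h : n ≤ M + k
      · exact ih n h
      · have hM : ¬ n ≤ M := by omega
        have hprev := ih (n - 1) (by omega)
        have hex : ∃ σ : F.X n ⟶ E.X n, σ ≫ g.f n = 𝟙 (F.X n) ∧
            σ ≫ E.d n (n - 1) = F.d n (n - 1) ≫ secAux F E g M base (n - 1) :=
          hstep n (secAux F E g M base (n - 1)) hprev.1 ⟨secAux F E g M base (n - 1 - 1), hprev.2⟩
        rw [secAux_of_gt F E g M base hM, dif_pos hex]
        exact hex.choose_spec
  intro n
  exact key (n - M).toNat n (by omega)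

theorem ext1_vanishes_of_bddBelow_acyclic_cotorsion_cycles
    [IsNoetherianRing R]
    (Y : ChainComplex (ModuleCat.{u} R) ℤ)
    (hbdd : ∃ N : ℤ, ∀ n < N, IsZero (Y.X n))
    (hacyclic : ∀ n, Y.ExactAt n)
    (hcycles : ∀ n, IsCotorsionModule (Y.cycles n))
    (F : ChainComplex (ModuleCat.{u} R) ℤ) (hF : FTotallyAcyclic F) :
    Ext1Vanishes F Y := by
  classical
  intro E f g w hse
  obtain ⟨N, hN⟩ := hbdd
  -- degreewise short exactness
  have hmap : ∀ n : ℤ, (((ShortComplex.mk f g w).map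
      (HomologicalComplex.eval (ModuleCat.{u} R) (ComplexShape.down ℤ) n))).ShortExact :=
    fun n => hse.map_of_exact (HomologicalComplex.eval _ _ n)
  have hgsurj : ∀ n : ℤ, Function.Surjective (g.f n) := fun n =>
    (ModuleCat.epi_iff_surjective (g.f n)).1 (hmap n).epi_g
  have hfinj : ∀ n : ℤ, Function.Injective (f.f n) := fun n =>
    (ModuleCat.mono_iff_injective (f.f n)).1 (hmap n).mono_f
  have hexactE : ∀ n : ℤ, ∀ e : E.X n, g.f n e = 0 → ∃ y : Y.X n, f.f n y = e := fun n =>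
    (ShortComplex.moduleCat_exact_iff _).1 (hmap n).exact
  have hwn : ∀ n : ℤ, f.f n ≫ g.f n = 0 := by
    intro n
    rw [← HomologicalComplex.comp_f, w]
    rfl
  -- acyclicity of Y, concretely
  have hYlift : ∀ (k m : ℤ), m + 1 = k → ∀ x : Y.X m, Y.d m (m - 1) x = 0 →
      ∃ z : Y.X k, Y.d k m z = x := by
    intro k m hk
    subst hk
    have hrel1 : (ComplexShape.down ℤ).Rel (m + 1) m := ComplexShape.down_mk _ _ rfl
    have hrel2 : (ComplexShape.down ℤ).Rel m (m - 1) := ComplexShape.down_mk _ _ (by omega)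
    have he := (Y.exactAt_iff' (m + 1) m (m - 1) (ComplexShape.prev_eq' _ hrel1)
      (ComplexShape.next_eq' _ hrel2)).1 (hacyclic m)
    rw [ShortComplex.moduleCat_exact_iff] at he
    exact he
  -- cotorsion of the concrete kernels of the differentials of Y
  have hker : ∀ n : ℤ, IsCotorsionModule
      (ModuleCat.of R (LinearMap.ker (Y.d n (n - 1)).hom)) := by
    intro n
    have hrel1 : (ComplexShape.down ℤ).Rel (n + 1) n := ComplexShape.down_mk _ _ rfl
    have hrel2 : (ComplexShape.down ℤ).Rel n (n - 1) := ComplexShape.down_mk _ _ (by omega)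
    have e : Y.cycles n ≅ ModuleCat.of R (LinearMap.ker (Y.d n (n - 1)).hom) :=
      (Y.cyclesIsoSc' (n + 1) n (n - 1) (ComplexShape.prev_eq' _ hrel1)
        (ComplexShape.next_eq' _ hrel2)) ≪≫ (Y.sc' (n + 1) n (n - 1)).moduleCatCyclesIso
    exact aux_isCotorsionModule_of_iso e.symm (hcycles n)
  -- the step construction
  have hstep : ∀ n : ℤ, ∀ prev : F.X (n - 1) ⟶ E.X (n - 1),
      prev ≫ g.f (n - 1) = 𝟙 (F.X (n - 1)) →
      (∃ t : F.X (n - 1 - 1) ⟶ E.X (n - 1 - 1),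
        prev ≫ E.d (n - 1) (n - 1 - 1) = F.d (n - 1) (n - 1 - 1) ≫ t) →
      ∃ σ : F.X n ⟶ E.X n, σ ≫ g.f n = 𝟙 (F.X n) ∧
        σ ≫ E.d n (n - 1) = F.d n (n - 1) ≫ prev := by
    intro n prev h1 ht'
    obtain ⟨t, ht⟩ := ht'
    set p : E.X n ⟶ ModuleCat.of R ((F.X n) × (E.X (n - 1))) :=
      ModuleCat.ofHom (LinearMap.prod (g.f n).hom (E.d n (n - 1)).hom) with hp
    set φ : F.X n ⟶ ModuleCat.of R ((F.X n) × (E.X (n - 1))) :=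
      ModuleCat.ofHom (LinearMap.prod LinearMap.id (prev.hom.comp (F.d n (n - 1)).hom)) with hφ
    -- the kernel of p is isomorphic to the kernel of the differential of Y
    have hmemk : ∀ y : LinearMap.ker (Y.d n (n - 1)).hom,
        ((f.f n).hom.comp (LinearMap.ker (Y.d n (n - 1)).hom).subtype) y ∈ LinearMap.ker p.hom := by
      intro y
      rw [LinearMap.mem_ker]
      have h1' : g.f n (f.f n y.val) = 0 := ConcreteCategory.congr_hom (hwn n) y.val
      have h2' : E.d n (n - 1) (f.f n y.val) = 0 := by
        have hc := ConcreteCategory.congr_hom (f.comm n (n - 1)) y.val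
        have : E.d n (n - 1) (f.f n y.val) = f.f (n - 1) (Y.d n (n - 1) y.val) := hc
        rw [this, LinearMap.mem_ker.1 y.property, map_zero]
      show (g.f n (f.f n y.val), E.d n (n - 1) (f.f n y.val)) = 0
      rw [h1', h2']
      rfl
    set θ : (LinearMap.ker (Y.d n (n - 1)).hom) →ₗ[R] (LinearMap.ker p.hom) :=
      LinearMap.codRestrict (LinearMap.ker p.hom)
        ((f.f n).hom.comp (LinearMap.ker (Y.d n (n - 1)).hom).subtype) hmemk with hθ
    have hθbij : Function.Bijective θ := by
      constructor
      · intro a b hab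
        apply Subtype.ext
        apply hfinj n
        exact congrArg Subtype.val hab
      · rintro ⟨v, hv⟩
        have hv1 : g.f n v = 0 := congrArg Prod.fst (LinearMap.mem_ker.1 hv)
        have hv2 : E.d n (n - 1) v = 0 := congrArg Prod.snd (LinearMap.mem_ker.1 hv)
        obtain ⟨y, hy⟩ := hexactE n v hv1
        have hdy : Y.d n (n - 1) y = 0 := by
          apply hfinj (n - 1)
          have hc := ConcreteCategory.congr_hom (f.comm n (n - 1)) y
          have : f.f (n - 1) (Y.d n (n - 1) y) = E.d n (n - 1) (f.f n y) := hc.symm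
          rw [this, hy, hv2, map_zero]
        exact ⟨⟨y, LinearMap.mem_ker.2 hdy⟩, Subtype.ext hy⟩
    have hkp : IsCotorsionModule (ModuleCat.of R (LinearMap.ker p.hom)) := by
      refine aux_isCotorsionModule_of_iso ?_ (hker n)
      exact ((LinearEquiv.ofBijective θ hθbij).symm.toModuleIso)
    -- every value of φ is in the image of p
    have hsub : ∀ x : F.X n, ∃ e₀ : E.X n, p e₀ = φ x := by
      intro x
      obtain ⟨e₀, he₀⟩ := hgsurj n x
      have hu1 : g.f (n - 1) (E.d n (n - 1) e₀ - prev (F.d n (n - 1) x)) = 0 := by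
        rw [map_sub]
        have hc : g.f (n - 1) (E.d n (n - 1) e₀) = F.d n (n - 1) (g.f n e₀) :=
          (ConcreteCategory.congr_hom (g.comm n (n - 1)) e₀).symm
        have hprev : g.f (n - 1) (prev (F.d n (n - 1) x)) = F.d n (n - 1) x :=
          ConcreteCategory.congr_hom h1 (F.d n (n - 1) x)
        rw [hc, he₀, hprev, sub_self]
      obtain ⟨y, hy⟩ := hexactE (n - 1) _ hu1
      have hdy : Y.d (n - 1) (n - 1 - 1) y = 0 := by
        apply hfinj (n - 1 - 1)
        have hc := ConcreteCategory.congr_hom (f.comm (n - 1) (n - 1 - 1)) y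
        have h0 : f.f (n - 1 - 1) (Y.d (n - 1) (n - 1 - 1) y) =
            E.d (n - 1) (n - 1 - 1) (f.f (n - 1) y) := hc.symm
        rw [h0, hy, map_sub]
        have hd1 : E.d (n - 1) (n - 1 - 1) (E.d n (n - 1) e₀) = 0 := by
          have := ConcreteCategory.congr_hom (E.d_comp_d n (n - 1) (n - 1 - 1)) e₀
          exact this
        have hd2 : E.d (n - 1) (n - 1 - 1) (prev (F.d n (n - 1) x)) = 0 := by
          have hc2 := ConcreteCategory.congr_hom ht (F.d n (n - 1) x)
          have : E.d (n - 1) (n - 1 - 1) (prev (F.d n (n - 1) x)) =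
              t (F.d (n - 1) (n - 1 - 1) (F.d n (n - 1) x)) := hc2
          rw [this]
          have hdd : F.d (n - 1) (n - 1 - 1) (F.d n (n - 1) x) = 0 :=
            ConcreteCategory.congr_hom (F.d_comp_d n (n - 1) (n - 1 - 1)) x
          rw [hdd, map_zero]
        rw [hd1, hd2, sub_zero, map_zero]
      obtain ⟨z, hz⟩ := hYlift n (n - 1) (by omega) y hdy
      refine ⟨e₀ - f.f n z, ?_⟩
      have hg1 : g.f n (f.f n z) = 0 := ConcreteCategory.congr_hom (hwn n) z
      have hd1 : E.d n (n - 1) (f.f n z) = f.f (n - 1) (Y.d n (n - 1) z) :=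
        ConcreteCategory.congr_hom (f.comm n (n - 1)) z
      show (g.f n (e₀ - f.f n z), E.d n (n - 1) (e₀ - f.f n z)) =
        (x, prev (F.d n (n - 1) x))
      rw [map_sub, map_sub, hg1, he₀, sub_zero, hd1, hz, hy]
      rw [sub_sub_cancel]
    obtain ⟨ψ, hψ⟩ := aux_exists_lift (hF.1 n) p φ hkp hsub
    refine ⟨ψ, ?_, ?_⟩
    · ext x
      have := ConcreteCategory.congr_hom hψ x
      have h1' : (g.f n (ψ x), E.d n (n - 1) (ψ x)) =
          (x, prev (F.d n (n - 1) x)) := this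
      exact congrArg Prod.fst h1'
    · ext x
      have := ConcreteCategory.congr_hom hψ x
      have h1' : (g.f n (ψ x), E.d n (n - 1) (ψ x)) =
          (x, prev (F.d n (n - 1) x)) := this
      exact congrArg Prod.snd h1'
  -- the base sections in low degrees, where Y vanishes
  have hginj : ∀ n : ℤ, n ≤ N - 1 → Function.Injective (g.f n) := by
    intro n hn a b hab
    have h0 : g.f n (a - b) = 0 := by rw [map_sub, hab, sub_self]
    obtain ⟨y, hy⟩ := hexactE n _ h0
    have hf0 : f.f n = 0 := (hN n (by omega)).eq_of_src (f.f n) 0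
    rw [hf0] at hy
    have : a - b = 0 := by rw [← hy]; rfl
    exact sub_eq_zero.1 this
  have hsec : ∀ n : ℤ, n ≤ N - 1 → ∃ b : F.X n ⟶ E.X n, b ≫ g.f n = 𝟙 (F.X n) := by
    intro n hn
    have hbij : Function.Bijective (g.f n) := ⟨hginj n hn, hgsurj n⟩
    set eqv := LinearEquiv.ofBijective (g.f n).hom hbij with heqv
    refine ⟨ModuleCat.ofHom (eqv.symm : F.X n →ₗ[R] E.X n), ?_⟩
    ext x
    show g.f n (eqv.symm x) = x
    have : g.f n (eqv.symm x) = eqv (eqv.symm x) := rfl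
    rw [this, LinearEquiv.apply_symm_apply]
  set base : ∀ n : ℤ, F.X n ⟶ E.X n :=
    fun n => if h : n ≤ N - 1 then (hsec n h).choose else 0 with hbase
  have hbase1 : ∀ n, n ≤ N - 1 → base n ≫ g.f n = 𝟙 (F.X n) := by
    intro n hn
    rw [hbase]
    simp only
    rw [dif_pos hn]
    exact (hsec n hn).choose_spec
  have hbase2 : ∀ n, n ≤ N - 1 → base n ≫ E.d n (n - 1) = F.d n (n - 1) ≫ base (n - 1) := by
    intro n hn
    ext x
    apply hginj (n - 1) (by omega)
    have hc : g.f (n - 1) (E.d n (n - 1) (base n x)) = F.d n (n - 1) (g.f n (base n x)) :=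
      (ConcreteCategory.congr_hom (g.comm n (n - 1)) (base n x)).symm
    have hb1 : g.f n (base n x) = x := ConcreteCategory.congr_hom (hbase1 n hn) x
    have hb2 : g.f (n - 1) (base (n - 1) (F.d n (n - 1) x)) = F.d n (n - 1) x :=
      ConcreteCategory.congr_hom (hbase1 (n - 1) (by omega)) (F.d n (n - 1) x)
    show g.f (n - 1) (E.d n (n - 1) (base n x)) = g.f (n - 1) (base (n - 1) (F.d n (n - 1) x))
    rw [hc, hb1, hb2]
  -- assemble the chain map section
  have hspec := secAux_spec F E g (N - 1) base hbase1 hbase2 hstep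
  refine ⟨{ f := fun n => secAux F E g (N - 1) base n, comm' := ?_ }, ?_⟩
  · intro i j hij
    have hij' : j + 1 = i := hij
    have hj : j = i - 1 := by omega
    subst hj
    exact (hspec i).2
  · apply HomologicalComplex.hom_ext
    intro n
    rw [HomologicalComplex.comp_f, HomologicalComplex.id_f]
    exact (hspec n).1
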